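/- Let λ be an overpartition whose Göllnitz–Gordon marking is decomposed into clusters GG(λ) = {α^{(N₁)}, α^{(N₁−1)}, …, α^{(1)}}. For 1 ≤ j < N₁, let α(j) = { r : |α_r^{(j)}| − |α_r^{(j+1)}| ≤ 2, with strict inequality required if α_r^{(j)} or α_r^{(j+1)} is odd }. Then α(j) has at most one element. -/

import Mathlib

open scoped BigOperators

/-- A part of an overpartition: its size, and whether it is overlined. -/
abbrev OPart := ℕ × Bool

/-- An overpartition: `f t` is the number of non-overlined parts equal to `t`, and
`fbar t` is the number of overlined parts equal to `t` (at most one, since only the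
first occurrence of a number may be overlined).  There are no parts of size `0`. -/
structure Overpartition where
  f : ℕ →₀ ℕ
  fbar : ℕ →₀ ℕ
  fbar_le_one : ∀ t, fbar t ≤ 1
  f_zero : f 0 = 0
  fbar_zero : fbar 0 = 0

namespace Overpartition

/-- the number of parts -/
def parts (l : Overpartition) : ℕ :=
  l.f.sum (fun _ m => m) + l.fbar.sum (fun _ m => m)

/-- weight: the sum of all parts -/
def wt (l : Overpartition) : ℕ :=
  l.f.sum (fun t m => t * m) + l.fbar.sum (fun t m => t * m)

/-- `V l s`: the number of overlined parts of size at most `s` -/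
def V (l : Overpartition) (s : ℕ) : ℕ := ∑ t ∈ Finset.Icc 1 s, l.fbar t

end Overpartition

/-- The difference/congruence conditions defining `Õ_{k,i}`. -/
def OCond (k i : ℕ) (l : Overpartition) : Prop :=
  (l.fbar 1 + l.f 2 ≤ i - 1) ∧
  (∀ t, 1 ≤ t → l.f (2*t) + l.fbar (2*t) + l.fbar (2*t+1) + l.f (2*t+2) ≤ k - 1) ∧
  (∀ t, 1 ≤ l.f (2*t+1) → l.f (2*t+2) ≤ k - 2) ∧
  (∀ t, 1 ≤ t → l.f (2*t) + l.fbar (2*t) + l.fbar (2*t+1) + l.f (2*t+2) = k - 1 →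
    t * l.f (2*t) + t * l.fbar (2*t) + t * l.fbar (2*t+1) + (t+1) * l.f (2*t+2)
      ≡ l.V (2*t+1) + i - 1 [MOD 2]) ∧
  (∀ t, 1 ≤ l.f (2*t+1) → l.f (2*t+2) = k - 2 →
    t + (t+1) * l.f (2*t+2) ≡ l.V (2*t+1) + i - 1 [MOD 2])

/-- Non-overlined parts are not congruent to `0, ±(2i-1)` modulo `4k-4`. -/
def PCond (k i : ℕ) (l : Overpartition) : Prop :=
  ∀ t, 0 < l.f t →
    ¬ t ≡ 0 [MOD 4*k-4] ∧ ¬ t ≡ 2*i-1 [MOD 4*k-4] ∧ ¬ t ≡ 4*k-3-2*i [MOD 4*k-4]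

/-- The difference/congruence conditions defining `Ẽ_{k,i}`. -/
def ECond (k i : ℕ) (l : Overpartition) : Prop :=
  l.f 1 ≤ i - 1 ∧
  (∀ t, 1 ≤ t → l.f t + l.fbar t + l.f (t+1) ≤ k - 1) ∧
  (∀ t, 1 ≤ t → l.f t + l.fbar t + l.f (t+1) = k - 1 →
    t * l.f t + t * l.fbar t + (t+1) * l.f (t+1) ≡ l.V t + i - 1 [MOD 2])

/-- the smallest part (in the order `1̄ < 1 < 2̄ < 2 < ⋯`) exists and is non-overlined -/
def SmallestNonOverlined (l : Overpartition) : Prop :=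
  ∃ s, 0 < l.f s ∧ l.fbar s = 0 ∧ ∀ t < s, l.f t = 0 ∧ l.fbar t = 0

/-- the smallest part (in the order `1̄ < 1 < 2̄ < 2 < ⋯`) exists and is overlined -/
def SmallestOverlined (l : Overpartition) : Prop :=
  ∃ s, 0 < l.fbar s ∧ ∀ t < s, l.f t = 0 ∧ l.fbar t = 0

def NoOverlined (l : Overpartition) : Prop := ∀ t, l.fbar t = 0

def NoOdd (l : Overpartition) : Prop := ∀ t, t % 2 = 1 → l.f t = 0 ∧ l.fbar t = 0

/-- the list of the parts of sizes `1,…,B` in increasing order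
(`1̄ < 1 < 2̄ < 2 < ⋯`); an overlined part is `(t, true)`. -/
def partsListUpTo (l : Overpartition) (B : ℕ) : List OPart :=
  (List.range B).flatMap (fun t =>
    (if l.fbar (t+1) = 1 then [((t+1 : ℕ), true)] else []) ++
    List.replicate (l.f (t+1)) ((t+1 : ℕ), false))

def obound (l : Overpartition) : ℕ := (l.f.support ∪ l.fbar.support).sup id + 1

/-- the list of all parts of `l` in increasing order -/
def partsList (l : Overpartition) : List OPart := partsListUpTo l (obound l)

/-- the multiset of parts of `l` -/
def partsMS (l : Overpartition) : Multiset OPart := (partsList l : Multiset OPart)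

/-- the least positive integer not belonging to `S` -/
def mex1 (S : Finset ℕ) : ℕ :=
  ((List.range (S.sup id + 2)).filter (fun r => decide (1 ≤ r ∧ r ∉ S))).headI

/-- the set of marks used by the already-marked parts satisfying `test` -/
def marksWhere (acc : List (OPart × ℕ)) (test : OPart → Bool) : Finset ℕ :=
  ((acc.filter (fun q => test q.1)).map (fun q => q.2)).toFinset

/-- process the parts in increasing order, assigning to each one the mark
computed by `markOf` from the previously marked parts -/
def markFold (markOf : List (OPart × ℕ) → OPart → ℕ) :
    List OPart → List (OPart × ℕ) → List (OPart × ℕ)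
  | [], acc => acc
  | p :: rest, acc => markFold markOf rest (acc ++ [(p, markOf acc p)])

/-- The Gordon marking rule: each part gets the smallest possible mark subject to:
(i) if `\overline{t+1}` is not a part, then all parts `t`, `t̄`, `t+1` get distinct
marks; (ii) if `\overline{t+1}` is a part, then the smallest mark assigned to a part
`t` or `t̄` may be reused for `t+1` or `\overline{t+1}`. -/
def gordonMarkOf (l : Overpartition) (acc : List (OPart × ℕ)) (p : OPart) : ℕ :=
  let same := marksWhere acc (fun q => decide (q.1 = p.1))
  let prev := marksWhere acc (fun q => decide (q.1 + 1 = p.1))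
  if l.fbar p.1 = 1 then
    mex1 (same ∪ (if h : prev.Nonempty then prev.erase (prev.min' h) else prev))
  else mex1 (same ∪ prev)

/-- the Gordon marking of `l`: the list of parts in increasing order with their marks -/
def gordonMarked (l : Overpartition) : List (OPart × ℕ) :=
  markFold (gordonMarkOf l) (partsList l) []

/-- `N_r`: the number of `r`-marked parts in the Gordon marking -/
def gordonN (l : Overpartition) (r : ℕ) : ℕ :=
  ((gordonMarked l).filter (fun q => decide (q.2 = r))).length

/-- The Göllnitz–Gordon marking rule (Definition 5.1): non-overlined odd and
overlined even parts get mark 1; an overlined odd part `\overline{2j+1}` gets the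
smallest mark different from those of `2j`, `\overline{2j}`; a non-overlined even part
`2j+2` gets the smallest mark different from earlier equal parts and, in case (b),
from the marks of `2j`, `\overline{2j}`, `\overline{2j+1}`; in case (c) it may not get
mark 1 and may reuse the smallest mark assigned to `2j` or `\overline{2j+1}`. -/
def ggMarkOf (l : Overpartition) (acc : List (OPart × ℕ)) (p : OPart) : ℕ :=
  if p.1 % 2 = 1 ∧ p.2 = false then 1
  else if p.1 % 2 = 0 ∧ p.2 = true then 1
  else if p.1 % 2 = 1 then
    mex1 (marksWhere acc (fun q => decide (q.1 = p.1 - 1)))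
  else
    let same := marksWhere acc (fun q => decide (q.1 = p.1))
    let lower := marksWhere acc
      (fun q => decide (q.1 = p.1 - 2 ∨ (q.1 = p.1 - 1 ∧ q.2 = true)))
    if 1 ∈ lower ∨ (l.f (p.1 - 1) = 0 ∧ l.fbar p.1 = 0) then
      mex1 (same ∪ lower)
    else
      mex1 (insert 1 same ∪ (if h : lower.Nonempty then lower.erase (lower.min' h) else lower))

/-- the Göllnitz–Gordon marking of `l` -/
def ggMarked (l : Overpartition) : List (OPart × ℕ) :=
  markFold (ggMarkOf l) (partsList l) []

/-- `N_r`: the number of `r`-marked parts in the Göllnitz–Gordon marking -/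
def ggN (l : Overpartition) (r : ℕ) : ℕ :=
  ((ggMarked l).filter (fun q => decide (q.2 = r))).length
/-- the 1-marked parts `λ^{(1)}_1 ≥ λ^{(1)}_2 ≥ ⋯` of the Göllnitz–Gordon marking,
in decreasing order (so index `j-1` holds `λ^{(1)}_j`) -/
def oneMarkedDesc (l : Overpartition) : List OPart :=
  (((ggMarked l).filter (fun q => decide (q.2 = 1))).map (fun q => q.1)).reverse

/-- the multiset of marked parts of a cluster: its `b`-th entry (0-indexed) is `(b+1)`-marked -/
def clusterMS (c : List OPart) : Multiset (OPart × ℕ) :=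
  ((c.zipIdx.map (fun q => (q.1, q.2 + 1))) : List (OPart × ℕ))

/-- there is a part of size `s` with mark `m` in the marked list `L` -/
def ExistsMarkedAt (L : List (OPart × ℕ)) (s m : ℕ) : Prop :=
  ∃ q ∈ L, q.1.1 = s ∧ q.2 = m

/-- conditions (i)–(iii) for the entry `y` (of mark `b+2`) following the entry `x`
(of mark `b+1`, i.e. 0-indexed position `b`) in a cluster -/
def chainStep (L : List (OPart × ℕ)) (b : ℕ) (x y : OPart) : Prop :=
  (x.1 % 2 = 1 → y.1 = x.1 + 1) ∧
  (x.1 % 2 = 0 →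
    (¬ ExistsMarkedAt L (x.1 + 2) (b + 1) → x.1 ≤ y.1 ∧ y.1 ≤ x.1 + 2) ∧
    (ExistsMarkedAt L (x.1 + 2) (b + 1) → x.1 ≤ y.1 ∧ y.1 ≤ x.1 + 1))

/-- cases (a), (b): the `j`-cluster is forced to be the singleton `λ^{(1)}_j` -/
def ForcedSingleton (one : List OPart) (j : ℕ) : Prop :=
  2 ≤ j ∧ ∃ cur prev, one[j-1]? = some cur ∧ one[j-2]? = some prev ∧
    (cur.1 = prev.1 ∨ (cur.1 % 2 = 1 ∧ prev.1 = cur.1 + 1))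

/-- `α` is the decomposition of the Göllnitz–Gordon marking of `l` into clusters
`α^{(N₁)}, …, α^{(1)}`: the `j`-cluster starts with the `j`-th largest 1-marked part,
the clusters partition the marked parts, forced singletons are singletons, consecutive
entries of a cluster obey conditions (i)–(iii), and each non-singleton-forced cluster
is a maximal such chain. -/
def IsClusterDecomp (l : Overpartition) (α : ℕ → List OPart) : Prop :=
  (∀ j, j = 0 ∨ ggN l 1 < j → α j = []) ∧
  (∀ j, 1 ≤ j → j ≤ ggN l 1 → (α j).head? = (oneMarkedDesc l)[j-1]?) ∧
  ((ggMarked l : Multiset (OPart × ℕ)) = ∑ j ∈ Finset.Icc 1 (ggN l 1), clusterMS (α j)) ∧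
  (∀ j, ForcedSingleton (oneMarkedDesc l) j → (α j).length = 1) ∧
  (∀ j b x y, (α j)[b]? = some x → (α j)[b+1]? = some y → chainStep (ggMarked l) b x y) ∧
  (∀ j, 1 ≤ j → j ≤ ggN l 1 → ¬ ForcedSingleton (oneMarkedDesc l) j →
    ∀ last, (α j).getLast? = some last →
      ¬ ∃ p : OPart,
        ((p, (α j).length + 1) ∈
          ((ggMarked l : Multiset (OPart × ℕ)) - ∑ j' ∈ Finset.Icc j (ggN l 1), clusterMS (α j'))) ∧
        chainStep (ggMarked l) ((α j).length - 1) last p)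

/-- the set `β(j)` (of 0-indexed positions): positions `c` such that
`|β_c^{(j)}| − |β_c^{(j+1)}| ≤ 2`, with strict inequality if either part is odd -/
def BetaIdx (α : ℕ → List OPart) (j : ℕ) : Set ℕ :=
  {c | ∃ x y, (α j)[c]? = some x ∧ (α (j+1))[c]? = some y ∧
     (x.1 : ℤ) - (y.1 : ℤ) ≤ 2 ∧ ((x.1 % 2 = 1 ∨ y.1 % 2 = 1) → (x.1 : ℤ) - (y.1 : ℤ) < 2)}

/-- `ν'` is obtained from `ν` by the second dilation of `p`-th kind: the odd part
`old` of the cluster `β^{(p)}` is replaced by the even part of size `|old|+1` with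
opposite overline status; when `p > 1` (in which case `β^{(p-1)}` must have no odd
part), additionally one part `chosen` of `β^{(p-1)}` — the entry indexed by the set
`β(p-1)` if it is nonempty, and otherwise the part of `β^{(p-1)}` of smallest size
and largest mark — is replaced by the part of size `|chosen|+1` with opposite
overline status. -/
def SecondDilationRel (ν ν' : Overpartition) (p : ℕ) : Prop :=
  ∃ α : ℕ → List OPart, IsClusterDecomp ν α ∧ 1 ≤ p ∧ p ≤ ggN ν 1 ∧
    ∃ old ∈ α p, old.1 % 2 = 1 ∧
      ((p = 1 ∧ partsMS ν' = (partsMS ν).erase old + {(old.1 + 1, !old.2)}) ∨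
       (1 < p ∧ (∀ q ∈ α (p-1), q.1 % 2 = 0) ∧
        ∃ c chosen, (α (p-1))[c]? = some chosen ∧
          ((BetaIdx α (p-1) = ∅ ∧ (∀ q ∈ α (p-1), chosen.1 ≤ q.1) ∧
             (∀ c' q, c < c' → (α (p-1))[c']? = some q → chosen.1 < q.1)) ∨
           c ∈ BetaIdx α (p-1)) ∧
          partsMS ν' = ((partsMS ν).erase old).erase chosen
            + {(old.1 + 1, !old.2), (chosen.1 + 1, !chosen.2)}))

/-- the second reduction of `p`-th kind: the inverse of the second dilation of `p`-th kind -/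
def SecondReductionRel (ν ν' : Overpartition) (p : ℕ) : Prop := SecondDilationRel ν' ν p

/-- the set of overpartitions satisfying the conditions of `Ẽ_{k,i}` whose Gordon
marking has exactly `N r` `r`-marked parts for `1 ≤ r ≤ k-1` -/
def ESetN (k i : ℕ) (N : ℕ → ℕ) : Set Overpartition :=
  {l | ECond k i l ∧ (∀ r, 1 ≤ r → r ≤ k-1 → gordonN l r = N r) ∧
    l.parts = ∑ j ∈ Finset.Icc 1 (k-1), N j}

def GSetN (k i : ℕ) (N : ℕ → ℕ) : Set Overpartition :=
  {l ∈ ESetN k i N | SmallestNonOverlined l}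

def HSetN (k i : ℕ) (N : ℕ → ℕ) : Set Overpartition :=
  {l ∈ ESetN k i N | SmallestOverlined l}

def BSetN (k i : ℕ) (N : ℕ → ℕ) : Set Overpartition :=
  {l ∈ GSetN k i N | NoOverlined l}

/-- the set of overpartitions satisfying the conditions of `Õ_{k,i}` whose
Göllnitz–Gordon marking has exactly `N r` `r`-marked parts for `1 ≤ r ≤ k-1` -/
def OSetN (k i : ℕ) (N : ℕ → ℕ) : Set Overpartition :=
  {l | OCond k i l ∧ (∀ r, 1 ≤ r → r ≤ k-1 → ggN l r = N r) ∧
    l.parts = ∑ j ∈ Finset.Icc 1 (k-1), N j}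

def WSetN (k i : ℕ) (N : ℕ → ℕ) : Set Overpartition :=
  {l ∈ OSetN k i N | NoOdd l}

/-- `(a;q)_n = ∏_{j=0}^{n-1} (1 - a q^j)` -/
noncomputable def qPoch (a q : ℂ) (n : ℕ) : ℂ := ∏ j ∈ Finset.range n, (1 - a * q ^ j)

/-- `(a;q)_∞ = ∏_{j=0}^{∞} (1 - a q^j)` -/
noncomputable def qPochInf (a q : ℂ) : ℂ := ∏' j : ℕ, (1 - a * q ^ j)

/-- `(a;q)_{n-1} = (a;q)_n / (1 - a q^{n-1})`, the standard meaning of a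
`q`-Pochhammer symbol with subscript `n - 1` (also for `n = 0`). -/
noncomputable def qPochSub1 (a q : ℂ) (n : ℕ) : ℂ := qPoch a q n / (1 - a * q ^ ((n : ℤ) - 1))

/-- sequences `N` with `N 1 ≥ N 2 ≥ ⋯ ≥ N (k-1) ≥ 0` (and `N j = 0` otherwise),
encoding the summation indices `N₁ ≥ ⋯ ≥ N_{k-1} ≥ 0` -/
def DecSeq (k : ℕ) : Set (ℕ → ℕ) :=
  {N | N 0 = 0 ∧ (∀ j, 1 ≤ j → N (j+1) ≤ N j) ∧ (∀ j, k ≤ j → N j = 0)}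

def doubleEmb : ℕ ↪ ℕ := ⟨fun t => 2 * t, mul_right_injective₀ two_ne_zero⟩

/-- doubling every part of an overpartition -/
noncomputable def double (l : Overpartition) : Overpartition where
  f := Finsupp.embDomain doubleEmb l.f
  fbar := Finsupp.embDomain doubleEmb l.fbar
  fbar_le_one := by
    intro t
    by_cases h : ∃ s, 2 * s = t
    · obtain ⟨s, rfl⟩ := h
      exact (Finsupp.embDomain_apply_self doubleEmb l.fbar s).trans_le (l.fbar_le_one s)
    · rw [Finsupp.embDomain_notin_range]
      · exact Nat.zero_le _
      · rintro ⟨s, rfl⟩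
        exact h ⟨s, rfl⟩
  f_zero := (Finsupp.embDomain_apply_self doubleEmb l.f 0).trans l.f_zero
  fbar_zero := (Finsupp.embDomain_apply_self doubleEmb l.fbar 0).trans l.fbar_zero
section Infra
open List

private lemma headI_mem {l : List ℕ} (h : l ≠ []) : l.headI ∈ l := by
  obtain ⟨a, t, rfl⟩ := List.exists_cons_of_ne_nil h
  simp

private lemma mex1_aux (S : Finset ℕ) :
    ((List.range (S.sup id + 2)).filter (fun r => decide (1 ≤ r ∧ r ∉ S))) ≠ [] := by
  intro hnil
  have hmem : (S.sup id + 1) ∈ (List.range (S.sup id + 2)).filter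
      (fun r => decide (1 ≤ r ∧ r ∉ S)) := by
    rw [List.mem_filter]
    refine ⟨List.mem_range.2 (by omega), ?_⟩
    simp only [decide_eq_true_eq]
    refine ⟨by omega, fun hc => ?_⟩
    have h2 : id (S.sup id + 1) ≤ S.sup id := Finset.le_sup hc
    simp only [id] at h2; omega
  rw [hnil] at hmem; exact (List.not_mem_nil hmem)

private lemma mex1_mem_filter (S : Finset ℕ) :
    mex1 S ∈ (List.range (S.sup id + 2)).filter (fun r => decide (1 ≤ r ∧ r ∉ S)) := by
  unfold mex1
  exact headI_mem (mex1_aux S)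

lemma mex1_pos (S : Finset ℕ) : 1 ≤ mex1 S := by
  have := mex1_mem_filter S
  rw [List.mem_filter] at this
  simp only [decide_eq_true_eq] at this
  exact this.2.1

lemma mex1_not_mem (S : Finset ℕ) : mex1 S ∉ S := by
  have := mex1_mem_filter S
  rw [List.mem_filter] at this
  simp only [decide_eq_true_eq] at this
  exact this.2.2

lemma mem_of_lt_mex1 {S : Finset ℕ} {m : ℕ} (h1 : 1 ≤ m) (h2 : m < mex1 S) : m ∈ S := by
  by_contra hm
  have hmem : m ∈ (List.range (S.sup id + 2)).filter (fun r => decide (1 ≤ r ∧ r ∉ S)) := by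
    rw [List.mem_filter]
    have hsup : mex1 S < S.sup id + 2 :=
      List.mem_range.1 ((List.mem_filter.1 (mex1_mem_filter S)).1)
    refine ⟨List.mem_range.2 (by omega), ?_⟩
    simp only [decide_eq_true_eq]; exact ⟨h1, hm⟩
  have hsorted : ((List.range (S.sup id + 2)).filter
      (fun r => decide (1 ≤ r ∧ r ∉ S))).Pairwise (· < ·) :=
    (List.pairwise_lt_range).filter _
  obtain ⟨a, t, hat⟩ := List.exists_cons_of_ne_nil (mex1_aux S)
  have hhead : mex1 S = a := by unfold mex1; rw [hat]; rfl
  rw [hat] at hmem hsorted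
  rcases List.mem_cons.1 hmem with rfl | hmt
  · omega
  · have := (List.pairwise_cons.1 hsorted).1 m hmt
    omega

end Infra
section Infra2
open List

lemma mem_marksWhere {acc : List (OPart × ℕ)} {test : OPart → Bool} {m : ℕ} :
    m ∈ marksWhere acc test ↔ ∃ q ∈ acc, test q.1 = true ∧ q.2 = m := by
  unfold marksWhere
  rw [List.mem_toFinset, List.mem_map]
  constructor
  · rintro ⟨q, hq, rfl⟩
    rw [List.mem_filter] at hq
    exact ⟨q, hq.1, hq.2, rfl⟩
  · rintro ⟨q, hq, ht, rfl⟩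
    exact ⟨q, List.mem_filter.2 ⟨hq, ht⟩, rfl⟩

/-- invariant satisfied by the output of `markFold` -/
def MarkedSpec (markOf : List (OPart × ℕ) → OPart → ℕ) (M : List (OPart × ℕ)) : Prop :=
  ∀ i (h : i < M.length), (M[i]).2 = markOf (M.take i) (M[i]).1

lemma markFold_spec (markOf : List (OPart × ℕ) → OPart → ℕ) :
    ∀ (L : List OPart) (acc : List (OPart × ℕ)), MarkedSpec markOf acc →
      (markFold markOf L acc).map Prod.fst = acc.map Prod.fst ++ L ∧
        MarkedSpec markOf (markFold markOf L acc) := by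
  intro L
  induction L with
  | nil => intro acc hacc; simpa [markFold] using hacc
  | cons p rest ih =>
    intro acc hacc
    have hspec : MarkedSpec markOf (acc ++ [(p, markOf acc p)]) := by
      intro i hi
      rw [List.length_append, List.length_singleton] at hi
      rcases Nat.lt_or_ge i acc.length with h | h
      · have h1 : (acc ++ [(p, markOf acc p)])[i] = acc[i] := List.getElem_append_left h
        have h2 : (acc ++ [(p, markOf acc p)]).take i = acc.take i := by
          rw [List.take_append_of_le_length (Nat.le_of_lt h)]
        rw [h1, h2]; exact hacc i h
      · have hieq : i = acc.length := by omega
        subst hieq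
        have h1 : (acc ++ [(p, markOf acc p)])[acc.length] = (p, markOf acc p) := by
          rw [List.getElem_append_right (Nat.le_refl _)]
          simp
        have h2 : (acc ++ [(p, markOf acc p)]).take acc.length = acc := by
          simp
        rw [h1, h2]
    have := ih (acc ++ [(p, markOf acc p)]) hspec
    rw [markFold]
    refine ⟨?_, this.2⟩
    rw [this.1]
    simp

lemma ggMarked_map_fst (l : Overpartition) :
    (ggMarked l).map Prod.fst = partsList l := by
  have := (markFold_spec (ggMarkOf l) (partsList l) [] (by intro i hi; simp at hi)).1
  simpa [ggMarked] using this

lemma ggMarked_spec (l : Overpartition) : MarkedSpec (ggMarkOf l) (ggMarked l) :=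
  (markFold_spec (ggMarkOf l) (partsList l) [] (by intro i hi; simp at hi)).2

/-! ### partsList facts -/

lemma partsList_pairwise (l : Overpartition) :
    (partsList l).Pairwise (fun a b => a.1 ≤ b.1 ∧ (a = b → a.2 = false)) := by
  unfold partsList partsListUpTo
  rw [List.flatMap_def, List.pairwise_flatten]
  constructor
  · intro lb hlb
    rw [List.mem_map] at hlb
    obtain ⟨t, _, rfl⟩ := hlb
    rw [List.pairwise_append]
    refine ⟨by split <;> simp, List.pairwise_replicate.2 (by simp), ?_⟩
    intro x hx y hy
    have hx' : x = ((t+1 : ℕ), true) := by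
      revert hx; split <;> simp_all
    have hy' : y = ((t+1 : ℕ), false) := List.eq_of_mem_replicate hy
    subst hx'; subst hy'
    exact ⟨le_refl _, by simp⟩
  · rw [List.pairwise_map]
    apply List.Pairwise.imp_of_mem (R := (· < ·)) ?_ (List.pairwise_lt_range)
    intro t s _ _ hts
    intro x hx y hy
    have hx1 : x.1 = t + 1 := by
      rcases List.mem_append.1 hx with h | h
      · revert h; split <;> simp_all
      · exact congrArg Prod.fst (List.eq_of_mem_replicate h)
    have hy1 : y.1 = s + 1 := by
      rcases List.mem_append.1 hy with h | h
      · revert h; split <;> simp_all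
      · exact congrArg Prod.fst (List.eq_of_mem_replicate h)
    refine ⟨by omega, fun hxy => ?_⟩
    exfalso
    rw [hxy] at hx1; omega

lemma partsList_pos (l : Overpartition) : ∀ q ∈ partsList l, 1 ≤ q.1 := by
  intro q hq
  unfold partsList partsListUpTo at hq
  rw [List.mem_flatMap] at hq
  obtain ⟨t, _, hq⟩ := hq
  rcases List.mem_append.1 hq with h | h
  · revert h; split <;> simp_all
  · have := List.eq_of_mem_replicate h; subst this; simp

end Infra2
section Infra3
open List

variable {l : Overpartition}

lemma ggMarked_pairwise (l : Overpartition) :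
    (ggMarked l).Pairwise (fun a b => a.1.1 ≤ b.1.1 ∧ (a.1 = b.1 → a.1.2 = false)) := by
  have h := partsList_pairwise l
  rw [← ggMarked_map_fst l, List.pairwise_map] at h
  exact h

lemma ggMarked_size_mono {i i' : ℕ} (hii' : i ≤ i') (h' : i' < (ggMarked l).length) :
    ((ggMarked l)[i]'(lt_of_le_of_lt hii' h')).1.1 ≤ ((ggMarked l)[i']).1.1 := by
  rcases Nat.lt_or_ge i i' with h | h
  · exact ((List.pairwise_iff_getElem.1 (ggMarked_pairwise l)) i i' _ h' h).1
  · have : i = i' := by omega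
    subst this; exact le_refl _

lemma ggMarked_over_unique {i i' : ℕ} (hii' : i < i') (h' : i' < (ggMarked l).length)
    (heq : ((ggMarked l)[i]'(lt_trans hii' h')).1 = ((ggMarked l)[i']).1) :
    ((ggMarked l)[i]'(lt_trans hii' h')).1.2 = false :=
  ((List.pairwise_iff_getElem.1 (ggMarked_pairwise l)) i i' _ h' hii').2 heq

/-- every strictly smaller-sized element lies in the prefix -/
lemma mem_take_of_size_lt {i : ℕ} (hi : i < (ggMarked l).length) {q : OPart × ℕ}
    (hq : q ∈ ggMarked l) (hlt : q.1.1 < ((ggMarked l)[i]).1.1) :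
    q ∈ (ggMarked l).take i := by
  obtain ⟨i', hi', rfl⟩ := List.mem_iff_getElem.1 hq
  have : i' < i := by
    by_contra hge
    have := ggMarked_size_mono (l := l) (Nat.le_of_not_lt hge) hi'
    omega
  have ht : ((ggMarked l).take i)[i']'(by rw [List.length_take]; omega) = (ggMarked l)[i'] := by
    rw [List.getElem_take]
  rw [← ht]; exact List.getElem_mem _

lemma mem_take_of_index_lt {i i' : ℕ} (hii' : i' < i) (hi : i < (ggMarked l).length) :
    (ggMarked l)[i']'(lt_trans hii' hi) ∈ (ggMarked l).take i := by
  have ht : ((ggMarked l).take i)[i']'(by rw [List.length_take]; omega)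
      = (ggMarked l)[i']'(lt_trans hii' hi) := by rw [List.getElem_take]
  rw [← ht]; exact List.getElem_mem _

/-- a value with multiplicity ≥ 2 occurs at two indices -/
lemma two_le_count_exists_indices {α : Type*} [DecidableEq α] :
    ∀ (L : List α) (v : α), 2 ≤ @List.count α instBEqOfDecidableEq v L →
      ∃ (i : ℕ) (i' : ℕ) (hi : i < L.length) (hi' : i' < L.length), i < i' ∧ L[i] = v ∧ L[i'] = v := by
  intro L
  induction L with
  | nil => intro v hv; simp at hv
  | cons a t ih =>
    intro v hv
    by_cases hav : a = v
    · subst hav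
      have : 1 ≤ t.count a := by
        rw [List.count_cons_self] at hv; omega
      have hmem : a ∈ t := List.count_pos_iff.1 (by omega)
      obtain ⟨k, hk, hk2⟩ := List.mem_iff_getElem.1 hmem
      exact ⟨0, k+1, by simp, by simpa using Nat.succ_lt_succ hk, by omega, rfl, by simpa using hk2⟩
    · have hcc : List.count v (a :: t) = List.count v t :=
        List.count_cons_of_ne hav
      rw [hcc] at hv
      obtain ⟨i, i', hi, hi', hlt, h1, h2⟩ := ih v hv
      exact ⟨i+1, i'+1, by simpa using Nat.succ_lt_succ hi, by simpa using Nat.succ_lt_succ hi',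
        by omega, by simpa using h1, by simpa using h2⟩

end Infra3
section Infra4
open List

variable {l : Overpartition} {u m : ℕ}

lemma ggMarked_size_pos {q : OPart × ℕ} (hq : q ∈ ggMarked l) : 1 ≤ q.1.1 := by
  have : q.1 ∈ (ggMarked l).map Prod.fst := List.mem_map_of_mem hq
  rw [ggMarked_map_fst] at this
  exact partsList_pos l q.1 this

/-- the lower-marks test used by `ggMarkOf` for an even part of size `u` -/
private def ltest (u : ℕ) : OPart → Bool :=
  fun q => decide (q.1 = u - 2 ∨ (q.1 = u - 1 ∧ q.2 = true))

private lemma ggMarkOf_even_eq (l : Overpartition) (acc : List (OPart × ℕ))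
    (hu : u % 2 = 0) :
    ggMarkOf l acc ((u : ℕ), false) =
      if 1 ∈ marksWhere acc (ltest u) ∨ (l.f (u - 1) = 0 ∧ l.fbar u = 0) then
        mex1 (marksWhere acc (fun q => decide (q.1 = u)) ∪ marksWhere acc (ltest u))
      else
        mex1 (insert 1 (marksWhere acc (fun q => decide (q.1 = u))) ∪
          (if h : (marksWhere acc (ltest u)).Nonempty then
            (marksWhere acc (ltest u)).erase ((marksWhere acc (ltest u)).min' h)
          else marksWhere acc (ltest u))) := by
  have h1 : ¬(u % 2 = 1) := by omega
  unfold ggMarkOf ltest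
  rw [if_neg (by simp [h1]), if_neg (by simp), if_neg (by simp [h1])]

private lemma ggMarkOf_oddover_eq (l : Overpartition) (acc : List (OPart × ℕ))
    (hu : u % 2 = 1) :
    ggMarkOf l acc ((u : ℕ), true) =
      mex1 (marksWhere acc (fun q => decide (q.1 = u - 1))) := by
  unfold ggMarkOf
  rw [if_neg (by simp), if_neg (by simp [hu]), if_pos (by simpa using hu)]

lemma odd_nonover_mark_one (hu : u % 2 = 1) (hq : ((u, false), m) ∈ ggMarked l) : m = 1 := by
  obtain ⟨i, hi, hieq⟩ := List.mem_iff_getElem.1 hq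
  have hm := ggMarked_spec l i hi
  rw [hieq] at hm
  replace hm : m = ggMarkOf l ((ggMarked l).take i) (u, false) := hm
  unfold ggMarkOf at hm
  rw [if_pos (by simpa using hu)] at hm
  exact hm

lemma even_over_mark_one (hu : u % 2 = 0) (hq : ((u, true), m) ∈ ggMarked l) : m = 1 := by
  obtain ⟨i, hi, hieq⟩ := List.mem_iff_getElem.1 hq
  have hm := ggMarked_spec l i hi
  rw [hieq] at hm
  replace hm : m = ggMarkOf l ((ggMarked l).take i) (u, true) := hm
  have h1 : ¬(u % 2 = 1) := by omega
  unfold ggMarkOf at hm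
  rw [if_neg (by simp [h1]), if_pos (by simp [hu])] at hm
  exact hm

/-- facts about the mark of an overlined odd part -/
lemma odd_over_mark (hu : u % 2 = 1) (hq : ((u, true), m) ∈ ggMarked l) :
    (∀ b, 1 ≤ b → b < m → ∃ q ∈ ggMarked l, q.1.1 = u - 1 ∧ q.2 = b) ∧
      (∀ q ∈ ggMarked l, q.1.1 = u - 1 → q.2 ≠ m) := by
  obtain ⟨i, hi, hieq⟩ := List.mem_iff_getElem.1 hq
  have hm := ggMarked_spec l i hi
  rw [hieq] at hm
  replace hm : m = ggMarkOf l ((ggMarked l).take i) (u, true) := hm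
  rw [ggMarkOf_oddover_eq l _ hu] at hm
  constructor
  · intro b hb1 hb2
    rw [hm] at hb2
    have := mem_of_lt_mex1 hb1 hb2
    rw [mem_marksWhere] at this
    obtain ⟨q, hqmem, htest, hq2⟩ := this
    simp only [decide_eq_true_eq] at htest
    exact ⟨q, List.take_subset _ _ hqmem, htest, hq2⟩
  · intro q hqmem hqsize hq2
    have hpos : 1 ≤ u := by omega
    have hlt : q.1.1 < ((ggMarked l)[i]).1.1 := by rw [hieq]; simp; omega
    have hqtake := mem_take_of_size_lt hi hqmem hlt
    have : q.2 ∈ marksWhere ((ggMarked l).take i) (fun q => decide (q.1 = u - 1)) :=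
      mem_marksWhere.2 ⟨q, hqtake, by simp [hqsize], rfl⟩
    rw [hq2, hm] at this
    exact mex1_not_mem _ this

/-- master lemma (†): if an even non-overlined part of size `u` and mark `m` has a part of
size `u-2` or an overlined part of size `u-1` carrying the same mark `m`, then every part of
size `u-2` and every overlined part of size `u-1` has mark at least `m`. -/
lemma even_mark_min (hu : u % 2 = 0) (hq : ((u, false), m) ∈ ggMarked l)
    (hwit : ∃ q' ∈ ggMarked l, (q'.1.1 = u - 2 ∨ (q'.1.1 = u - 1 ∧ q'.1.2 = true)) ∧ q'.2 = m) :
    ∀ q ∈ ggMarked l, (q.1.1 = u - 2 ∨ (q.1.1 = u - 1 ∧ q.1.2 = true)) → m ≤ q.2 := by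
  obtain ⟨i, hi, hieq⟩ := List.mem_iff_getElem.1 hq
  have hm := ggMarked_spec l i hi
  rw [hieq] at hm
  replace hm : m = ggMarkOf l ((ggMarked l).take i) (u, false) := hm
  rw [ggMarkOf_even_eq l _ hu] at hm
  -- membership of a conditioned part in `lower`
  have hmemlow : ∀ q ∈ ggMarked l, (q.1.1 = u - 2 ∨ (q.1.1 = u - 1 ∧ q.1.2 = true)) →
      q.2 ∈ marksWhere ((ggMarked l).take i) (ltest u) := by
    intro q hqmem hcond
    have hqpos : 1 ≤ q.1.1 := ggMarked_size_pos hqmem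
    have hlt : q.1.1 < ((ggMarked l)[i]).1.1 := by
      rw [hieq]; simp only []; rcases hcond with h | h
      · omega
      · omega
    exact mem_marksWhere.2 ⟨q, mem_take_of_size_lt hi hqmem hlt, by
      simp only [ltest, decide_eq_true_eq]
      rcases hcond with h | h
      · exact Or.inl h
      · exact Or.inr ⟨h.1, h.2⟩, rfl⟩
  obtain ⟨q', hq'mem, hq'cond, hq'2⟩ := hwit
  have hmlow : m ∈ marksWhere ((ggMarked l).take i) (ltest u) := by
    rw [← hq'2]; exact hmemlow q' hq'mem hq'cond
  intro q hqmem hcond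
  have hqlow := hmemlow q hqmem hcond
  by_cases hbr : 1 ∈ marksWhere ((ggMarked l).take i) (ltest u) ∨ (l.f (u - 1) = 0 ∧ l.fbar u = 0)
  · rw [if_pos hbr] at hm
    exfalso
    have := mex1_not_mem (marksWhere ((ggMarked l).take i) (fun q => decide (q.1 = u)) ∪
      marksWhere ((ggMarked l).take i) (ltest u))
    rw [← hm] at this
    exact this (Finset.mem_union_right _ hmlow)
  · rw [if_neg hbr] at hm
    have hne : (marksWhere ((ggMarked l).take i) (ltest u)).Nonempty := ⟨m, hmlow⟩
    rw [dif_pos hne] at hm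
    have hnotmem := mex1_not_mem (insert 1 (marksWhere ((ggMarked l).take i)
        (fun q => decide (q.1 = u))) ∪
      (marksWhere ((ggMarked l).take i) (ltest u)).erase
        ((marksWhere ((ggMarked l).take i) (ltest u)).min' hne))
    rw [← hm] at hnotmem
    have hmin : m = (marksWhere ((ggMarked l).take i) (ltest u)).min' hne := by
      by_contra hne'
      exact hnotmem (Finset.mem_union_right _ (Finset.mem_erase.2 ⟨hne', hmlow⟩))
    rw [hmin]
    exact Finset.min'_le _ _ hqlow

/-- no two equal non-overlined even marked parts -/
lemma even_dup_false (hu : u % 2 = 0)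
    (h2 : 2 ≤ Multiset.count ((((u : ℕ), false), m) : OPart × ℕ)
      (↑(ggMarked l) : Multiset (OPart × ℕ))) : False := by
  rw [Multiset.coe_count] at h2
  obtain ⟨i, i', hi, hi', hlt, h1, h2'⟩ := two_le_count_exists_indices (ggMarked l) _ h2
  have hm := ggMarked_spec l i' hi'
  rw [h2'] at hm
  replace hm : m = ggMarkOf l ((ggMarked l).take i') (u, false) := hm
  rw [ggMarkOf_even_eq l _ hu] at hm
  have hsm : m ∈ marksWhere ((ggMarked l).take i') (fun q => decide (q.1 = u)) := by
    refine mem_marksWhere.2 ⟨(ggMarked l)[i]'(lt_trans hlt hi'), mem_take_of_index_lt hlt hi', ?_, ?_⟩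
    · rw [h1]; simp
    · rw [h1]
  split at hm
  · have := mex1_not_mem (marksWhere ((ggMarked l).take i') (fun q => decide (q.1 = u)) ∪
      marksWhere ((ggMarked l).take i') (ltest u))
    rw [← hm] at this
    exact this (Finset.mem_union_left _ hsm)
  · have := mex1_not_mem (insert 1 (marksWhere ((ggMarked l).take i')
        (fun q => decide (q.1 = u))) ∪
      (if h : (marksWhere ((ggMarked l).take i') (ltest u)).Nonempty then
        (marksWhere ((ggMarked l).take i') (ltest u)).erase
          ((marksWhere ((ggMarked l).take i') (ltest u)).min' h)
      else marksWhere ((ggMarked l).take i') (ltest u)))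
    rw [← hm] at this
    exact this (Finset.mem_union_left _ (Finset.mem_insert_of_mem hsm))

/-- no two equal overlined marked parts -/
lemma over_dup_false {t : Bool} (ht : t = true)
    (h2 : 2 ≤ Multiset.count ((((u : ℕ), t), m) : OPart × ℕ)
      (↑(ggMarked l) : Multiset (OPart × ℕ))) : False := by
  rw [Multiset.coe_count] at h2
  obtain ⟨i, i', hi, hi', hlt, h1, h2'⟩ := two_le_count_exists_indices (ggMarked l) _ h2
  have := ggMarked_over_unique hlt hi' (by rw [h1, h2'])
  rw [h1] at this
  simp [ht] at this

/-- two overlined parts of the same size are impossible (even with different marks) -/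
lemma over_over_false {m m' : ℕ} (hq : ((u, true), m) ∈ ggMarked l)
    (hq' : ((u, true), m') ∈ ggMarked l) (hmm : m ≠ m') : False := by
  obtain ⟨i, hi, hieq⟩ := List.mem_iff_getElem.1 hq
  obtain ⟨i', hi', hieq'⟩ := List.mem_iff_getElem.1 hq'
  have hne : i ≠ i' := by
    intro hc; subst hc
    rw [hieq'] at hieq
    have h2 := congrArg Prod.snd hieq
    simp only [] at h2
    exact hmm h2.symm
  rcases Nat.lt_or_ge i i' with hlt | hge
  · have := ggMarked_over_unique hlt hi' (by rw [hieq, hieq'])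
    rw [hieq] at this; simp at this
  · have hlt : i' < i := by omega
    have := ggMarked_over_unique hlt hi (by rw [hieq, hieq'])
    rw [hieq'] at this; simp at this

end Infra4
section Infra5
open List

variable {l : Overpartition} {α : ℕ → List OPart}

lemma mem_clusterMS {cl : List OPart} {x : OPart} {p : ℕ} (hx : cl[p]? = some x) :
    ((x, p + 1) : OPart × ℕ) ∈ clusterMS cl := by
  unfold clusterMS
  rw [Multiset.mem_coe, List.mem_map]
  exact ⟨(x, p), List.mk_mem_zipIdx_iff_getElem?.2 hx, rfl⟩

lemma cluster_elem_mem (h3 : (↑(ggMarked l) : Multiset (OPart × ℕ)) =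
      ∑ j' ∈ Finset.Icc 1 (ggN l 1), clusterMS (α j'))
    {j' p : ℕ} (hj'1 : 1 ≤ j') (hj'2 : j' ≤ ggN l 1) {x : OPart}
    (hx : (α j')[p]? = some x) : ((x, p + 1) : OPart × ℕ) ∈ ggMarked l := by
  have hmem : ((x, p + 1) : OPart × ℕ) ∈ (↑(ggMarked l) : Multiset (OPart × ℕ)) := by
    rw [h3]
    exact Multiset.mem_sum.2 ⟨j', Finset.mem_Icc.2 ⟨hj'1, hj'2⟩, mem_clusterMS hx⟩
  exact Multiset.mem_coe.1 hmem

lemma cluster_elem_count2 (h3 : (↑(ggMarked l) : Multiset (OPart × ℕ)) =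
      ∑ j' ∈ Finset.Icc 1 (ggN l 1), clusterMS (α j'))
    {j1 j2 p : ℕ} (hj1 : 1 ≤ j1) (hj12 : j1 < j2) (hj2 : j2 ≤ ggN l 1) {x : OPart}
    (hx1 : (α j1)[p]? = some x) (hx2 : (α j2)[p]? = some x) :
    2 ≤ Multiset.count ((x, p + 1) : OPart × ℕ) (↑(ggMarked l) : Multiset (OPart × ℕ)) := by
  rw [h3, Multiset.count_sum']
  have hsub : ({j1, j2} : Finset ℕ) ⊆ Finset.Icc 1 (ggN l 1) := by
    intro a ha
    rcases Finset.mem_insert.1 ha with rfl | ha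
    · exact Finset.mem_Icc.2 ⟨hj1, by omega⟩
    · rw [Finset.mem_singleton] at ha; subst ha
      exact Finset.mem_Icc.2 ⟨by omega, hj2⟩
  have hle : Multiset.count ((x, p + 1) : OPart × ℕ) (clusterMS (α j1)) +
      Multiset.count ((x, p + 1) : OPart × ℕ) (clusterMS (α j2)) ≤
      ∑ x_1 ∈ Finset.Icc 1 (ggN l 1),
        Multiset.count ((x, p + 1) : OPart × ℕ) (clusterMS (α x_1)) := by
    have hp2 : ∑ x_1 ∈ ({j1, j2} : Finset ℕ),
        Multiset.count ((x, p + 1) : OPart × ℕ) (clusterMS (α x_1)) =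
        Multiset.count ((x, p + 1) : OPart × ℕ) (clusterMS (α j1)) +
        Multiset.count ((x, p + 1) : OPart × ℕ) (clusterMS (α j2)) :=
      Finset.sum_pair (show j1 ≠ j2 by omega)
    rw [← hp2]
    exact Finset.sum_le_sum_of_subset hsub
  have c1 : 1 ≤ Multiset.count ((x, p + 1) : OPart × ℕ) (clusterMS (α j1)) :=
    Multiset.one_le_count_iff_mem.2 (mem_clusterMS hx1)
  have c2 : 1 ≤ Multiset.count ((x, p + 1) : OPart × ℕ) (clusterMS (α j2)) :=
    Multiset.one_le_count_iff_mem.2 (mem_clusterMS hx2)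
  omega

/-- adjacent sizes cannot share a mark `b ≥ 2` -/
lemma adj_mark_false {u b : ℕ} {ta tb : Bool} (hb : 2 ≤ b)
    (hA : ((u, ta), b) ∈ ggMarked l) (hB : ((u + 1, tb), b) ∈ ggMarked l) : False := by
  rcases Nat.even_or_odd u with hu | hu
  · -- u even, u+1 odd
    have hu0 : u % 2 = 0 := Nat.even_iff.1 hu
    have hu1 : (u + 1) % 2 = 1 := by omega
    cases tb with
    | false => have := odd_nonover_mark_one hu1 hB; omega
    | true =>
      have := (odd_over_mark hu1 hB).2 ((u, ta), b) hA (by simp)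
      exact this rfl
  · -- u odd, u+1 even
    have hu1 : u % 2 = 1 := Nat.odd_iff.1 hu
    have hu0 : (u + 1) % 2 = 0 := by omega
    cases ta with
    | false => have := odd_nonover_mark_one hu1 hA; omega
    | true =>
      cases tb with
      | true => have := even_over_mark_one hu0 hB; omega
      | false =>
        obtain ⟨q1, hq1mem, hq1size, hq1mark⟩ := (odd_over_mark hu1 hA).1 1 (le_refl 1) (by omega)
        have hmin := even_mark_min hu0 hB
          ⟨((u, true), b), hA, Or.inr ⟨by simp, rfl⟩, rfl⟩ q1 hq1mem
          (Or.inl (by simpa using hq1size))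
        omega

/-- two parts with the same mark `b ≥ 2` differ in size by at least 2 -/
lemma mark_gap {pa pb : OPart} {b : ℕ} (hb : 2 ≤ b)
    (hA : ((pa, b) : OPart × ℕ) ∈ ggMarked l) (hB : ((pb, b) : OPart × ℕ) ∈ ggMarked l)
    (hcnt : pa = pb → 2 ≤ Multiset.count ((pa, b) : OPart × ℕ)
      (↑(ggMarked l) : Multiset (OPart × ℕ))) :
    pa.1 + 2 ≤ pb.1 ∨ pb.1 + 2 ≤ pa.1 := by
  have hAe : (((pa.1, pa.2) : OPart), b) ∈ ggMarked l := hA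
  have hBe : (((pb.1, pb.2) : OPart), b) ∈ ggMarked l := hB
  by_cases hsz : pa.1 = pb.1
  · exfalso
    by_cases hpp : pa = pb
    · subst hpp
      have h2 := hcnt rfl
      have hpe : pa = (pa.1, pa.2) := rfl
      rw [hpe] at h2
      cases hb2 : pa.2 with
      | true =>
        rw [hb2] at h2
        exact over_dup_false rfl h2
      | false =>
        rw [hb2] at h2
        rcases Nat.even_or_odd pa.1 with he | ho
        · exact even_dup_false (Nat.even_iff.1 he) h2
        · have hAe' : ((pa.1, false), b) ∈ ggMarked l := by rw [← hb2]; exact hAe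
          have := odd_nonover_mark_one (Nat.odd_iff.1 ho) hAe'; omega
    · -- same size, different overline
      have hbb : pa.2 ≠ pb.2 := by
        intro hcb; exact hpp (Prod.ext hsz hcb)
      rcases Nat.even_or_odd pa.1 with he | ho
      · -- even: the overlined one has mark 1
        have he0 : pa.1 % 2 = 0 := Nat.even_iff.1 he
        cases ha2 : pa.2 with
        | true =>
          have hAe' : ((pa.1, true), b) ∈ ggMarked l := by rw [← ha2]; exact hAe
          have := even_over_mark_one he0 hAe'; omega
        | false =>
          have hb2 : pb.2 = true := by
            cases hb2 : pb.2 with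
            | true => rfl
            | false => rw [ha2, hb2] at hbb; exact absurd rfl hbb
          have hBe' : ((pb.1, true), b) ∈ ggMarked l := by rw [← hb2]; exact hBe
          have := even_over_mark_one (by rw [← hsz]; exact he0) hBe'; omega
      · have ho1 : pa.1 % 2 = 1 := Nat.odd_iff.1 ho
        cases ha2 : pa.2 with
        | false =>
          have hAe' : ((pa.1, false), b) ∈ ggMarked l := by rw [← ha2]; exact hAe
          have := odd_nonover_mark_one ho1 hAe'; omega
        | true =>
          have hb2 : pb.2 = false := by
            cases hb2 : pb.2 with
            | false => rfl
            | true => rw [ha2, hb2] at hbb; exact absurd rfl hbb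
          have hBe' : ((pb.1, false), b) ∈ ggMarked l := by rw [← hb2]; exact hBe
          have := odd_nonover_mark_one (by rw [← hsz]; exact ho1) hBe'; omega
  · rcases Nat.lt_or_ge pa.1 pb.1 with hlt | hge
    · by_cases hadj : pb.1 = pa.1 + 1
      · exfalso
        exact adj_mark_false hb hAe (by rw [← hadj]; exact hBe)
      · left; omega
    · have hlt : pb.1 < pa.1 := by omega
      by_cases hadj : pa.1 = pb.1 + 1
      · exfalso
        exact adj_mark_false hb hBe (by rw [← hadj]; exact hAe)
      · right; omega

/-- the one-marked parts list is sorted (consecutive entries compare) -/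
lemma one_head_sorted {j : ℕ} (hj1 : 1 ≤ j) (hj2 : j + 1 ≤ ggN l 1) {X0 Y0 : OPart}
    (hx : (oneMarkedDesc l)[j - 1]? = some X0) (hy : (oneMarkedDesc l)[j]? = some Y0) :
    Y0.1 ≤ X0.1 := by
  have hN : ggN l 1 =
      (((ggMarked l).filter (fun q => decide (q.2 = 1))).map (fun q => q.1)).length := by
    unfold ggN; rw [List.length_map]
  set F := ((ggMarked l).filter (fun q => decide (q.2 = 1))).map (fun q => q.1) with hF
  have hone : oneMarkedDesc l = F.reverse := rfl
  rw [hone] at hx hy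
  obtain ⟨hx1, hx2⟩ := List.getElem?_eq_some_iff.1 hx
  obtain ⟨hy1, hy2⟩ := List.getElem?_eq_some_iff.1 hy
  rw [List.getElem_reverse] at hx2 hy2
  have hlen : j + 1 ≤ F.length := by omega
  have hpair : F.Pairwise (fun p q => p.1 ≤ q.1) := by
    rw [hF, List.pairwise_map]
    exact ((ggMarked_pairwise l).filter _).imp (fun h => h.1)
  have hidx : F.length - 1 - j < F.length - 1 - (j - 1) := by
    rw [List.length_reverse] at hx1 hy1; omega
  have := List.pairwise_iff_getElem.1 hpair (F.length - 1 - j) (F.length - 1 - (j - 1))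
    (by rw [List.length_reverse] at hy1; omega) (by rw [List.length_reverse] at hx1; omega) hidx
  rw [hx2, hy2] at this
  exact this

lemma chainStep_bounds {L : List (OPart × ℕ)} {b : ℕ} {x y : OPart}
    (h : chainStep L b x y) :
    x.1 ≤ y.1 ∧ y.1 ≤ x.1 + 2 ∧ (x.1 % 2 = 1 → y.1 = x.1 + 1) := by
  obtain ⟨h1, h2⟩ := h
  by_cases hx : x.1 % 2 = 1
  · have := h1 hx; exact ⟨by omega, by omega, h1⟩
  · have hx0 : x.1 % 2 = 0 := by omega
    obtain ⟨ha, hb'⟩ := h2 hx0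
    by_cases hE : ExistsMarkedAt L (x.1 + 2) (b + 1)
    · have := hb' hE; exact ⟨this.1, by omega, fun hh => absurd hh hx⟩
    · have := ha hE; exact ⟨this.1, this.2, fun hh => absurd hh hx⟩

end Infra5
section Main
open List

lemma betaIdx_key (l : Overpartition) (α : ℕ → List OPart) (h : IsClusterDecomp l α)
    (j : ℕ) (hj1 : 1 ≤ j) (hj : j < ggN l 1) {c c' : ℕ} (hcc' : c < c')
    (hc : c ∈ BetaIdx α j) (hc' : c' ∈ BetaIdx α j) : False := by
  obtain ⟨h1, h2, h3, h4, h5, h6⟩ := h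
  simp only [BetaIdx, Set.mem_setOf_eq] at hc hc'
  obtain ⟨x, y, hx, hy, hle, hstr⟩ := hc
  obtain ⟨x', y', hx', hy', hle', hstr'⟩ := hc'
  obtain ⟨hlenX, hgX'⟩ := List.getElem?_eq_some_iff.1 hx'
  obtain ⟨hlenY, hgY'⟩ := List.getElem?_eq_some_iff.1 hy'
  set X : ℕ → OPart := fun p => (α j).getD p ((0 : ℕ), false) with hXdef
  set Y : ℕ → OPart := fun p => (α (j+1)).getD p ((0 : ℕ), false) with hYdef
  have hXp : ∀ p, p ≤ c' → (α j)[p]? = some (X p) := by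
    intro p hp
    have hplen : p < (α j).length := Nat.lt_of_le_of_lt hp hlenX
    rw [List.getElem?_eq_getElem hplen]
    simp only [hXdef]
    rw [List.getD_eq_getElem _ _ hplen]
  have hYp : ∀ p, p ≤ c' → (α (j+1))[p]? = some (Y p) := by
    intro p hp
    have hplen : p < (α (j+1)).length := Nat.lt_of_le_of_lt hp hlenY
    rw [List.getElem?_eq_getElem hplen]
    simp only [hYdef]
    rw [List.getD_eq_getElem _ _ hplen]
  have hxX : x = X c := by
    have hh := hXp c (le_of_lt hcc'); rw [hx] at hh; exact Option.some.inj hh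
  have hyY : y = Y c := by
    have hh := hYp c (le_of_lt hcc'); rw [hy] at hh; exact Option.some.inj hh
  have hxX' : x' = X c' := by
    have hh := hXp c' (le_refl _); rw [hx'] at hh; exact Option.some.inj hh
  have hyY' : y' = Y c' := by
    have hh := hYp c' (le_refl _); rw [hy'] at hh; exact Option.some.inj hh
  rw [hxX, hyY] at hle hstr
  rw [hxX', hyY'] at hle' hstr'
  have hmemX : ∀ p, p ≤ c' → ((X p, p + 1) : OPart × ℕ) ∈ ggMarked l :=
    fun p hp => cluster_elem_mem h3 hj1 (le_of_lt hj) (hXp p hp)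
  have hmemY : ∀ p, p ≤ c' → ((Y p, p + 1) : OPart × ℕ) ∈ ggMarked l :=
    fun p hp => cluster_elem_mem h3 (by omega) hj (hYp p hp)
  have hchX : ∀ p, p < c' → (X p).1 ≤ (X (p+1)).1 ∧ (X (p+1)).1 ≤ (X p).1 + 2 ∧
      ((X p).1 % 2 = 1 → (X (p+1)).1 = (X p).1 + 1) :=
    fun p hp => chainStep_bounds (h5 j p (X p) (X (p+1)) (hXp p (by omega)) (hXp (p+1) (by omega)))
  have hchY : ∀ p, p < c' → (Y p).1 ≤ (Y (p+1)).1 ∧ (Y (p+1)).1 ≤ (Y p).1 + 2 ∧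
      ((Y p).1 % 2 = 1 → (Y (p+1)).1 = (Y p).1 + 1) :=
    fun p hp => chainStep_bounds (h5 (j+1) p (Y p) (Y (p+1)) (hYp p (by omega)) (hYp (p+1) (by omega)))
  have hYmono : ∀ q, q ≤ c' → ∀ p, p ≤ q → (Y p).1 ≤ (Y q).1 := by
    intro q
    induction q with
    | zero =>
      intro _ p hp
      exact le_of_eq (by rw [Nat.le_zero.mp hp])
    | succ n ih =>
      intro hq p hp
      rcases Nat.lt_or_ge p (n+1) with hlt | hge
      · exact le_trans (ih (by omega) p (by omega)) (hchY n (by omega)).1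
      · have : p = n + 1 := by omega
        subst this; exact le_refl _
  -- heads and sortedness
  have honeX : (oneMarkedDesc l)[j-1]? = some (X 0) := by
    have hh := h2 j hj1 (le_of_lt hj)
    rw [List.head?_eq_getElem?, hXp 0 (by omega)] at hh
    exact hh.symm
  have honeY : (oneMarkedDesc l)[j]? = some (Y 0) := by
    have hh := h2 (j+1) (by omega) hj
    rw [List.head?_eq_getElem?, hYp 0 (by omega)] at hh
    have hidx : j + 1 - 1 = j := by omega
    rw [hidx] at hh
    exact hh.symm
  have hyx0 : (Y 0).1 ≤ (X 0).1 := one_head_sorted hj1 (by omega) honeX honeY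
  have hne0 : (Y 0).1 ≠ (X 0).1 := by
    intro heq
    have hfs : ForcedSingleton (oneMarkedDesc l) (j+1) := by
      refine ⟨by omega, Y 0, X 0, ?_, ?_, Or.inl heq⟩
      · have hidx : j + 1 - 1 = j := by omega
        rw [hidx]; exact honeY
      · have hidx : j + 1 - 2 = j - 1 := by omega
        rw [hidx]; exact honeX
    have hl1 := h4 (j+1) hfs
    omega
  -- noncrossing: at every position ≥ 1 the j-cluster part is ≥ 2 larger
  have hgapd : ∀ p, 1 ≤ p → p ≤ c' → (Y p).1 + 2 ≤ (X p).1 := by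
    intro p
    induction p with
    | zero => intro hp; omega
    | succ n ih =>
      intro _ hp
      have hup : (Y (n+1)).1 ≤ (X (n+1)).1 + 1 := by
        rcases Nat.eq_zero_or_pos n with rfl | hn
        · have hy1 := (hchY 0 (by omega)).2.1
          have hx1 := (hchX 0 (by omega)).1
          omega
        · have hdn := ih (by omega) (by omega)
          have hy1 := (hchY n (by omega)).2.1
          have hx1 := (hchX n (by omega)).1
          omega
      have hdich := mark_gap (show 2 ≤ (n+1)+1 by omega) (hmemX (n+1) hp) (hmemY (n+1) hp)
        (fun heq => cluster_elem_count2 h3 hj1 (show j < j+1 by omega) hj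
          (hXp (n+1) hp) (by rw [heq]; exact hYp (n+1) hp))
      rcases hdich with hl | hr
      · omega
      · exact hr
  -- at position c'
  have hYc'pos : 1 ≤ (Y c').1 := ggMarked_size_pos (hmemY c' (le_refl _))
  have hdc' : (X c').1 = (Y c').1 + 2 := by
    have := hgapd c' (by omega) (le_refl _)
    omega
  have hxe : (X c').1 % 2 = 0 := by
    by_contra hodd
    have := hstr' (Or.inl (by omega))
    omega
  have hXc'f : X c' = ((X c').1, false) := by
    cases hb2 : (X c').2 with
    | false => exact Prod.ext rfl hb2
    | true =>
      exfalso
      have hm : (((X c').1, true), c' + 1) ∈ ggMarked l := by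
        rw [← hb2]; exact hmemX c' (le_refl _)
      have := even_over_mark_one hxe hm
      omega
  have hdag : ∀ q ∈ ggMarked l,
      (q.1.1 = (X c').1 - 2 ∨ (q.1.1 = (X c').1 - 1 ∧ q.1.2 = true)) → c' + 1 ≤ q.2 := by
    apply even_mark_min hxe
    · rw [← hXc'f]; exact hmemX c' (le_refl _)
    · exact ⟨((Y c', c' + 1) : OPart × ℕ), hmemY c' (le_refl _), Or.inl (show (Y c').1 = (X c').1 - 2 by omega), rfl⟩
  -- backward induction: the j-cluster sizes are frozen at (X c').1 from c to c'
  have hback : ∀ k, k ≤ c' - c → (X (c' - k)).1 = (X c').1 := by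
    intro k
    induction k with
    | zero => intro _; rfl
    | succ n ih =>
      intro hk
      have hprev : (X (c' - n)).1 = (X c').1 := ih (by omega)
      have hp1 : (c' - (n+1)) + 1 = c' - n := by omega
      have hplt : c' - (n+1) < c' := by omega
      obtain ⟨hb1, hb2, hb3⟩ := hchX (c' - (n+1)) hplt
      rw [hp1, hprev] at hb1 hb2 hb3
      by_cases hodd : (X (c' - (n+1))).1 % 2 = 1
      · exfalso
        have hxval : (X (c' - (n+1))).1 = (X c').1 - 1 := by
          have := hb3 hodd; omega
        rcases Nat.eq_zero_or_pos (c' - (n+1)) with hz | hpos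
        · -- position 0, so c = 0 and the β-condition at c is strict
          have hc0 : c = 0 := by omega
          subst hc0
          rw [hz] at hxval hodd
          have hstr2 := hstr (Or.inl hodd)
          have hym : (Y 0).1 ≤ (Y c').1 := hYmono c' (le_refl _) 0 (by omega)
          have hy0 : (Y 0).1 = (X c').1 - 2 := by omega
          have := hdag ((Y 0, 1) : OPart × ℕ) (hmemY 0 (by omega)) (Or.inl hy0)
          omega
        · cases ht : (X (c' - (n+1))).2 with
          | false =>
            have hm : (((X (c' - (n+1))).1, false), (c' - (n+1)) + 1) ∈ ggMarked l := by
              rw [← ht]; exact hmemX _ (by omega)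
            have := odd_nonover_mark_one hodd hm
            omega
          | true =>
            have hm : (((X (c' - (n+1))).1, true), (c' - (n+1)) + 1) ∈ ggMarked l := by
              rw [← ht]; exact hmemX _ (by omega)
            have := hdag _ hm (Or.inr ⟨hxval, rfl⟩)
            omega
      · have hval : (X (c' - (n+1))).1 = (X c').1 ∨ (X (c' - (n+1))).1 = (X c').1 - 2 := by
          omega
        rcases hval with hv | hv
        · exact hv
        · exfalso
          have := hdag ((X (c' - (n+1)), (c' - (n+1)) + 1) : OPart × ℕ)
            (hmemX _ (by omega)) (Or.inl hv)
          omega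
  have hXc : (X c).1 = (X c').1 := by
    have hh := hback (c' - c) (le_refl _)
    have hcc : c' - (c' - c) = c := by omega
    rw [hcc] at hh; exact hh
  have hym : (Y c).1 ≤ (Y c').1 := hYmono c' (le_refl _) c (by omega)
  have hyc : (Y c).1 = (X c').1 - 2 := by omega
  have := hdag ((Y c, c + 1) : OPart × ℕ) (hmemY c (by omega)) (Or.inl hyc)
  omega

end Main
/-- Proposition 5.4: for `1 ≤ j < N₁`, the set
`α(j) = {r : |α_r^{(j)}| - |α_r^{(j+1)}| ≤ 2, strict if either part is odd}`
has at most one element. -/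
theorem betaIdx_subsingleton
    (l : Overpartition) (α : ℕ → List OPart) (h : IsClusterDecomp l α)
    (j : ℕ) (hj1 : 1 ≤ j) (hj : j < ggN l 1) :
    (BetaIdx α j).Subsingleton := by
  intro a ha b hb
  by_contra hab
  rcases Nat.lt_or_ge a b with hlt | hge
  · exact betaIdx_key l α h j hj1 hj hlt ha hb
  · exact betaIdx_key l α h j hj1 hj (by omega : b < a) hb ha
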